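/- Let Φ = ℤ + ℤπ ⊆ ℝ (with π irrational) ordered by the real order, and let u : Φ → k[[t^{Φ≥0}]]^× be the group homomorphism with u(1) = (1+t^π)^n for a fixed integer n and u(π) = 1, where k is a field. Then for every Hahn series ∑_{r,s} c_{r,s} t^{r+sπ} ∈ k[[t^{Φ≥0}]], the series ∑_{r,s} c_{r,s} (1+t^π)^{nr} t^{r+sπ} is again an element of k[[t^{Φ≥0}]], i.e., its support is well-ordered. -/

import Mathlib

section aux

variable {k : Type*} [Field k] (π : ℝ)

/-- The set of nonnegative integer multiples of `π`. -/
def natMulSet : Set ℝ := {x : ℝ | ∃ j : ℕ, x = (j : ℝ) * π}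

lemma natMulSet_zero : (0 : ℝ) ∈ natMulSet π := ⟨0, by simp⟩

lemma natMulSet_pi : π ∈ natMulSet π := ⟨1, by simp⟩

lemma natMulSet_add {a b : ℝ} (ha : a ∈ natMulSet π) (hb : b ∈ natMulSet π) :
    a + b ∈ natMulSet π := by
  obtain ⟨i, rfl⟩ := ha; obtain ⟨j, rfl⟩ := hb
  exact ⟨i + j, by push_cast; ring⟩

lemma natMulSet_isPWO (hπ : 0 < π) : (natMulSet π).IsPWO := by
  have hx : 0 < (HahnSeries.single π (1 : ℝ) : HahnSeries ℝ ℝ).orderTop := by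
    rw [HahnSeries.orderTop_single one_ne_zero]
    exact_mod_cast hπ
  have h := HahnSeries.SummableFamily.isPWO_iUnion_support_powers (HahnSeries.zero_le_orderTop_iff.mp hx.le)
  refine h.mono ?_
  rintro x ⟨j, rfl⟩
  refine Set.mem_iUnion.2 ⟨j, ?_⟩
  have : (HahnSeries.single π (1 : ℝ)) ^ j = HahnSeries.single ((j : ℝ) * π) (1 : ℝ) := by
    induction j with
    | zero => simp [HahnSeries.single_zero_one]
    | succ m ih =>
        rw [pow_succ, ih, HahnSeries.single_mul_single]
        congr 1 <;> push_cast <;> ring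
  rw [this, HahnSeries.support_single_of_ne one_ne_zero]
  exact rfl

variable {π}

lemma supp_mul_natMulSet {a b : HahnSeries ℝ k}
    (ha : a.support ⊆ natMulSet π) (hb : b.support ⊆ natMulSet π) :
    (a * b).support ⊆ natMulSet π := by
  intro x hx
  obtain ⟨u, hu, v, hv, rfl⟩ := HahnSeries.support_mul_subset hx
  exact natMulSet_add π (ha hu) (hb hv)

lemma supp_pow_natMulSet {a : HahnSeries ℝ k} (ha : a.support ⊆ natMulSet π) :
    ∀ m : ℕ, (a ^ m).support ⊆ natMulSet π := by
  intro m
  induction m with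
  | zero =>
      simp only [pow_zero]
      intro x hx
      rw [HahnSeries.support_one, Set.mem_singleton_iff] at hx
      rw [hx]; exact natMulSet_zero π
  | succ j ih =>
      rw [pow_succ]
      exact supp_mul_natMulSet ih ha

lemma supp_base_natMulSet :
    ((1 : HahnSeries ℝ k) + HahnSeries.single π (1 : k)).support ⊆ natMulSet π := by
  intro x hx
  rcases HahnSeries.support_add_subset _ _ hx with h | h
  · rw [HahnSeries.support_one, Set.mem_singleton_iff] at h
    rw [h]; exact natMulSet_zero π
  · have hx : x = π := HahnSeries.support_single_subset h
    rw [hx]; exact natMulSet_pi π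

lemma supp_inv_natMulSet (hπ : 0 < π) :
    ((1 : HahnSeries ℝ k) + HahnSeries.single π (1 : k))⁻¹.support ⊆ natMulSet π := by
  set x : HahnSeries ℝ k := -HahnSeries.single π (1 : k) with hxdef
  have hx : 0 < x.orderTop := by
    rw [hxdef, HahnSeries.orderTop_neg, HahnSeries.orderTop_single one_ne_zero]
    exact_mod_cast hπ
  have hmul := HahnSeries.SummableFamily.one_sub_self_mul_hsum_powers hx
  have hsub : (1 : HahnSeries ℝ k) - x = 1 + HahnSeries.single π (1 : k) := by
    rw [hxdef, sub_neg_eq_add]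
  rw [hsub] at hmul
  have hinv : ((1 : HahnSeries ℝ k) + HahnSeries.single π (1 : k))⁻¹ =
      (HahnSeries.SummableFamily.powers x).hsum := inv_eq_of_mul_eq_one_right hmul
  rw [hinv]
  refine (HahnSeries.SummableFamily.support_hsum_subset).trans ?_
  refine Set.iUnion_subset fun j => ?_
  have hxs : x.support ⊆ natMulSet π := by
    intro y hy
    rw [hxdef, HahnSeries.support_neg] at hy
    have hy' : y = π := HahnSeries.support_single_subset hy
    rw [hy']; exact natMulSet_pi π
  simpa [HahnSeries.SummableFamily.coe_powers hx, hx] using supp_pow_natMulSet hxs j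

lemma supp_zpow_natMulSet (hπ : 0 < π) (m : ℤ) :
    (((1 : HahnSeries ℝ k) + HahnSeries.single π (1 : k)) ^ m).support ⊆ natMulSet π := by
  cases m with
  | ofNat j =>
      rw [Int.ofNat_eq_coe, zpow_natCast]
      exact supp_pow_natMulSet supp_base_natMulSet j
  | negSucc j =>
      rw [zpow_negSucc, ← inv_pow]
      exact supp_pow_natMulSet (supp_inv_natMulSet hπ) (j + 1)

end aux

/-- Let `Φ = ℤ + ℤπ ⊆ ℝ` (`π` irrational, positive) with the real order, `k` a
field, and `n` a fixed integer, corresponding to the homomorphism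
`u : Φ → k[[t^{Φ≥0}]]ˣ` with `u 1 = (1+t^π)^n`, `u π = 1`.  For every Hahn series
`f = ∑_{r,s} c_{r,s} t^{r+sπ}` with support in `Φ_{≥0}` (decomposed by `rr`, `ss`),
the family of series `c_{r,s} (1+t^π)^{nr} t^{r+sπ}` is summable, and its sum
`∑_{r,s} c_{r,s} (1+t^π)^{nr} t^{r+sπ}` is again an element of `k[[t^{Φ≥0}]]`:
in particular its support is well-ordered and lies in `Φ_{≥0}`. -/
theorem twist_by_unit_preserves_hahn
    {k : Type*} [Field k] (π : ℝ) (hirr : Irrational π) (hπ : 0 < π) (n : ℤ)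
    (f : HahnSeries ℝ k)
    (hsupp : f.support ⊆ {x : ℝ | (∃ r s : ℤ, x = (r : ℝ) + (s : ℝ) * π) ∧ 0 ≤ x})
    (rr ss : ℝ → ℤ)
    (hdec : ∀ x ∈ f.support, x = (rr x : ℝ) + (ss x : ℝ) * π) :
    ∃ F : HahnSeries.SummableFamily ℝ k ℝ,
      (∀ x : ℝ, F x =
        f.coeff x • ((1 + HahnSeries.single π (1 : k)) ^ (n * rr x) *
          HahnSeries.single x (1 : k))) ∧
      F.hsum.support ⊆ {x : ℝ | (∃ r s : ℤ, x = (r : ℝ) + (s : ℝ) * π) ∧ 0 ≤ x} := by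
  classical
  set G : ℝ → HahnSeries ℝ k := fun x =>
    f.coeff x • ((1 + HahnSeries.single π (1 : k)) ^ (n * rr x) *
      HahnSeries.single x (1 : k)) with hG
  -- support bound for each member of the family
  have hGsupp : ∀ x : ℝ, (G x).support ⊆
      {y : ℝ | x ∈ f.support ∧ ∃ c ∈ natMulSet π, y = x + c} := by
    intro x y hy
    have hcx : f.coeff x ≠ 0 := by
      intro h0
      rw [hG] at hy
      simp only [h0, zero_smul, HahnSeries.support_zero] at hy
      exact hy
    have hy' : y ∈ (((1 + HahnSeries.single π (1 : k)) ^ (n * rr x)) *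
        HahnSeries.single x (1 : k)).support := by
      intro h0
      apply hy
      rw [hG]
      simp only [HahnSeries.mem_support, not_not] at h0 ⊢
      simp [HahnSeries.coeff_smul, h0]
    obtain ⟨u, hu, v, hv, rfl⟩ := HahnSeries.support_mul_subset hy'
    have hu' : u ∈ natMulSet π := supp_zpow_natMulSet hπ (n * rr x) hu
    have hv' : v = x := HahnSeries.support_single_subset hv
    exact ⟨hcx, u, hu', by rw [hv']; ring⟩
  have hUnion : (⋃ x : ℝ, (G x).support).IsPWO := by
    refine ((f.isPWO_support.add (natMulSet_isPWO π hπ)).mono ?_)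
    refine Set.iUnion_subset fun x => (hGsupp x).trans ?_
    rintro y ⟨hx, c, hc, rfl⟩
    exact Set.add_mem_add hx hc
  have hfin : ∀ g : ℝ, {x : ℝ | (G x).coeff g ≠ 0}.Finite := by
    intro g
    have hsub : {x : ℝ | (G x).coeff g ≠ 0} ⊆
        (fun j : ℕ => g - (j : ℝ) * π) '' (Set.Iic ⌈g / π⌉₊) := by
      intro x hx
      have hg : g ∈ (G x).support := hx
      obtain ⟨hxs, c, hc, hgc⟩ := hGsupp x hg
      obtain ⟨j, rfl⟩ := hc
      have hx0 : 0 ≤ x := (hsupp hxs).2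
      have hjg : (j : ℝ) * π ≤ g := by nlinarith
      have hg0 : 0 ≤ g := le_trans (by positivity) hjg
      have hj : (j : ℝ) ≤ g / π := (le_div_iff₀ hπ).mpr hjg
      have hj' : j ≤ ⌈g / π⌉₊ := by
        exact_mod_cast hj.trans (Nat.le_ceil _)
      exact ⟨j, hj', by rw [hgc]; ring⟩
    exact Set.Finite.subset ((Set.finite_Iic _).image _) hsub
  refine ⟨⟨G, hUnion, hfin⟩, fun x => rfl, ?_⟩
  refine (HahnSeries.SummableFamily.support_hsum_subset).trans ?_
  refine Set.iUnion_subset fun x => ?_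
  refine (hGsupp x).trans ?_
  rintro y ⟨hx, c, ⟨j, rfl⟩, rfl⟩
  obtain ⟨⟨r, s, hrs⟩, hx0⟩ := hsupp hx
  refine ⟨⟨r, s + j, by push_cast; rw [hrs]; ring⟩, ?_⟩
  have : 0 ≤ (j : ℝ) * π := by positivity
  linarith
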